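/- Let Y be a finite type, X an input set, n ≥ 1 an integer, and R₁, R₂ : X → PMF(Y). Fix x₁⁰, x₁¹ ∈ X and write μ⁰ = R₁(x₁⁰), μ¹ = R₁(x₁¹). Let G = {y : μ¹(y) > μ⁰(y)} and L = {y : μ¹(y) < μ⁰(y)}, assume β := ∑_{y∈G}(μ¹(y) − μ⁰(y)) > 0, and assume the balance condition (∑_{y∈G} μ¹(y)) / (∑_{y∈G} μ⁰(y)) = (∑_{y∈L} μ⁰(y)) / (∑_{y∈L} μ¹(y)) =: p (so p > 1). Fix x* ∈ X with ∑_{y∈G} R₂(x*)(y) > 0 and ∑_{y∈L} R₂(x*)(y) > 0. Set α = β/(p−1), r₁ = ∑_{y∈G} R₂(x*)(y) and r₀ = ∑_{y∈L} R₂(x*)(y) (equivalently, r₁ = pα/q₁ and r₀ = pα/q₀ with q₁ = (∑_{y∈G} μ¹(y))/(∑_{y∈G} R₂(x*)(y)) and q₀ = (∑_{y∈L} μ⁰(y))/(∑_{y∈L} R₂(x*)(y))); note pα + α ≤ 1 and r₀ + r₁ ≤ 1 hold automatically. Let (P^{r₀,r₁}, Q^{r₀,r₁}) be the pair with parameters n,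 p, α, r₀, r₁. Then for every real γ ≥ 0: D_γ( S(R₁(x₁⁰), R₂(x*), …, R₂(x*)) ‖ S(R₁(x₁¹), R₂(x*), …, R₂(x*)) ) ≥ D_γ( P^{r₀,r₁} ‖ Q^{r₀,r₁} ), where R₂(x*) appears n−1 times in each shuffle. -/

import Mathlib

open scoped ENNReal
open Finset

noncomputable section

/-- Clamp a real number into an `ℝ≥0∞` probability (identity on `[0,1]`). -/
def prob (x : ℝ) : ℝ≥0∞ := min (ENNReal.ofReal x) 1

lemma prob_le_one (x : ℝ) : prob x ≤ 1 := min_le_right _ _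

/-- Hockey-stick divergence `D_γ(P‖Q) = ∑_y max 0 (P y − γ·Q y)`. -/
def hsDiv {Y : Type*} (P Q : PMF Y) (γ : ℝ) : ℝ :=
  ∑' y, max 0 ((P y).toReal - γ * (Q y).toReal)

/-- The shuffle of a list of PMFs: sample independently and return the multiset of results. -/
def shuffle {Y : Type*} : List (PMF Y) → PMF (Multiset Y)
  | [] => PMF.pure 0
  | μ :: μs => μ.bind fun y => (shuffle μs).map fun s => y ::ₘ s

/-- Binomial law on ℕ with `m` trials and success probability `θ` (a real, clamped). -/
def binomN (θ : ℝ) (m : ℕ) : PMF ℕ :=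
  (PMF.binomial (prob θ).toNNReal
    (by simpa using ENNReal.toNNReal_mono ENNReal.one_ne_top (prob_le_one θ)) m).map Fin.val

/-- Three-point distribution on `Fin 3` with weights `w1, w2, 1 − w1 − w2` (clamped). -/
def triR (w1 w2 : ℝ) : PMF (Fin 3) :=
  PMF.ofFintype
    ![prob w1, min (prob w2) (1 - prob w1),
      1 - (prob w1 + min (prob w2) (1 - prob w1))]
    (by
      have h : prob w1 + min (prob w2) (1 - prob w1) ≤ 1 := by
        calc prob w1 + min (prob w2) (1 - prob w1)
            ≤ prob w1 + (1 - prob w1) := by gcongr; exact min_le_right _ _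
          _ = 1 := add_tsub_cancel_of_le (prob_le_one w1)
      simp only [Fin.sum_univ_three, Matrix.cons_val_zero, Matrix.cons_val_one,
        Matrix.head_cons, Matrix.cons_val_two, Matrix.tail_cons]
      exact add_tsub_cancel_of_le h)

/-- Law of `(A+Δ₁, C−A+Δ₂)` where `C ~ Binomial(m, θC)`, `A ~ Binomial(C, θA)`, and
`(Δ₁,Δ₂)` equals `(1,0)` w.p. `w1`, `(0,1)` w.p. `w2`, `(0,0)` otherwise. -/
def lawP (m : ℕ) (θC θA w1 w2 : ℝ) : PMF (ℕ × ℕ) :=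
  (binomN θC m).bind fun c =>
    (binomN θA c).bind fun a =>
      (triR w1 w2).map fun d =>
        if d = 0 then (a + 1, c - a) else if d = 1 then (a, c - a + 1) else (a, c - a)

/-- Law of `(A+Δ₂, C−A+Δ₁)` for the same sampling process. -/
def lawQ (m : ℕ) (θC θA w1 w2 : ℝ) : PMF (ℕ × ℕ) :=
  (binomN θC m).bind fun c =>
    (binomN θA c).bind fun a =>
      (triR w1 w2).map fun d =>
        if d = 0 then (a, c - a + 1) else if d = 1 then (a + 1, c - a) else (a, c - a)

/-- `P^q_{β,p}` with `n` users: `α = β/(p−1)`, `r = pα/q`, `C ~ Binomial(n−1, 2r)`,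
`A ~ Binomial(C, 1/2)`. -/
def Pq (n : ℕ) (p β q : ℝ) : PMF (ℕ × ℕ) :=
  lawP (n - 1) (2 * (p * (β / (p - 1)) / q)) (1 / 2) (p * (β / (p - 1))) (β / (p - 1))

/-- `Q^q_{β,p}`. -/
def Qq (n : ℕ) (p β q : ℝ) : PMF (ℕ × ℕ) :=
  lawQ (n - 1) (2 * (p * (β / (p - 1)) / q)) (1 / 2) (p * (β / (p - 1))) (β / (p - 1))

/-- `CDF_{c,θ}[c₁,c₂] = ∑_{c₁ ≤ i ≤ c₂, 0 ≤ i ≤ c} C(c,i) θ^i (1−θ)^{c−i}`. -/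
def binCDF (c : ℕ) (θ : ℝ) (c1 c2 : ℝ) : ℝ :=
  ∑ i ∈ Finset.range (c + 1),
    if c1 ≤ (i : ℝ) ∧ (i : ℝ) ≤ c2 then (c.choose i : ℝ) * θ ^ i * (1 - θ) ^ (c - i) else 0

/-- Expectation of `f` under `Binomial(m, θ)`. -/
def binExp (m : ℕ) (θ : ℝ) (f : ℕ → ℝ) : ℝ :=
  ∑ c ∈ Finset.range (m + 1), (m.choose c : ℝ) * θ ^ c * (1 - θ) ^ (m - c) * f c

/-- The `(p, β)`-variation property of the first randomizer. -/
def VariationProp {X Y : Type*} (R1 : X → PMF Y) (p β : ℝ) : Prop :=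
  ∀ x x' : X, (∀ y, (R1 x y).toReal ≤ p * (R1 x' y).toReal) ∧ hsDiv (R1 x) (R1 x') 1 ≤ β

/-- The `q`-ratio property of the first randomizer w.r.t. the others. -/
def RatioProp {X Y : Type*} {m : ℕ} (R1 : X → PMF Y) (R : Fin m → X → PMF Y) (q : ℝ) : Prop :=
  ∀ (i : Fin m) (x x' : X) (y : Y), (R1 x y).toReal ≤ q * (R i x' y).toReal


/-- The set where `μ1` puts strictly more mass than `μ0`. -/
def Gset {Y : Type*} [Fintype Y] (μ0 μ1 : PMF Y) : Finset Y :=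
  Finset.univ.filter fun y => (μ0 y).toReal < (μ1 y).toReal


/-! ### Auxiliary machinery -/

section Aux

open Classical in
/-- ENNReal version of the hockey-stick divergence. -/
def hsDivE {Y : Type*} (P Q : PMF Y) (γ : ℝ≥0∞) : ℝ≥0∞ :=
  ∑' y, (P y - γ * Q y)

lemma hsDivE_le_one {Y : Type*} (P Q : PMF Y) (γ : ℝ≥0∞) : hsDivE P Q γ ≤ 1 := by
  calc hsDivE P Q γ ≤ ∑' y, P y := ENNReal.tsum_le_tsum fun y => tsub_le_self
    _ = 1 := P.tsum_coe

lemma hsDiv_eq_toReal {Y : Type*} (P Q : PMF Y) {γ : ℝ} (hγ : 0 ≤ γ) :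
    hsDiv P Q γ = (hsDivE P Q (ENNReal.ofReal γ)).toReal := by
  rw [hsDivE, ENNReal.tsum_toReal_eq (fun y => by
    exact ne_top_of_le_ne_top (P.apply_ne_top y) tsub_le_self)]
  refine tsum_congr fun y => ?_
  have hQ : (ENNReal.ofReal γ * Q y).toReal = γ * (Q y).toReal := by
    rw [ENNReal.toReal_mul, ENNReal.toReal_ofReal hγ]
  rcases le_total (ENNReal.ofReal γ * Q y) (P y) with h | h
  · rw [ENNReal.toReal_sub_of_le h (P.apply_ne_top y), hQ,
      max_eq_right (by
        have := ENNReal.toReal_mono (P.apply_ne_top y) h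
        rw [hQ] at this; linarith)]
  · rw [tsub_eq_zero_of_le h, ENNReal.toReal_zero, max_eq_left (by
      have hne : ENNReal.ofReal γ * Q y ≠ ⊤ := by
        refine ENNReal.mul_ne_top ENNReal.ofReal_ne_top (Q.apply_ne_top y)
      have := ENNReal.toReal_mono hne h
      rw [hQ] at this; linarith)]

lemma tsum_tsub_le {ι : Type*} (f g : ι → ℝ≥0∞) :
    (∑' i, f i) - (∑' i, g i) ≤ ∑' i, (f i - g i) := by
  rw [tsub_le_iff_right, ← ENNReal.tsum_add]
  exact ENNReal.tsum_le_tsum fun i => tsub_le_iff_right.mp le_rfl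

lemma hsDivE_map_le {A B : Type*} (P Q : PMF A) (f : A → B) (γ : ℝ≥0∞) :
    hsDivE (P.map f) (Q.map f) γ ≤ hsDivE P Q γ := by
  classical
  unfold hsDivE
  calc ∑' b, ((P.map f) b - γ * (Q.map f) b)
      ≤ ∑' b, ∑' a, ((if b = f a then P a else 0) - (if b = f a then γ * Q a else 0)) := by
        refine ENNReal.tsum_le_tsum fun b => ?_
        rw [PMF.map_apply, PMF.map_apply, ← ENNReal.tsum_mul_left]
        refine le_trans (le_of_eq ?_) (tsum_tsub_le _ _)
        congr 1
        exact tsum_congr fun a => by split <;> simp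
    _ = ∑' a, ∑' b, (if b = f a then P a - γ * Q a else 0) := by
        rw [ENNReal.tsum_comm]
        refine tsum_congr fun a => tsum_congr fun b => by split <;> simp
    _ = ∑' a, (P a - γ * Q a) := tsum_congr fun a => tsum_ite_eq (f a) _

lemma hsDiv_map_le {A B : Type*} (P Q : PMF A) (f : A → B) {γ : ℝ} (hγ : 0 ≤ γ) :
    hsDiv (P.map f) (Q.map f) γ ≤ hsDiv P Q γ := by
  rw [hsDiv_eq_toReal _ _ hγ, hsDiv_eq_toReal _ _ hγ]
  exact ENNReal.toReal_mono (ne_top_of_le_ne_top ENNReal.one_ne_top (hsDivE_le_one _ _ _))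
    (hsDivE_map_le _ _ _ _)

/-! ### Binomial closed forms -/

lemma prob_eq {θ : ℝ} (h1 : θ ≤ 1) : prob θ = ENNReal.ofReal θ :=
  min_eq_left (by simpa using ENNReal.ofReal_le_ofReal h1)

/-- Real closed form of the binomial pmf. -/
def binR (θ : ℝ) (m k : ℕ) : ℝ := θ ^ k * (1 - θ) ^ (m - k) * (m.choose k)

lemma binR_nonneg {θ : ℝ} (h0 : 0 ≤ θ) (h1 : θ ≤ 1) (m k : ℕ) : 0 ≤ binR θ m k := by
  have h : (0:ℝ) ≤ 1 - θ := by linarith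
  exact mul_nonneg (mul_nonneg (pow_nonneg h0 _) (pow_nonneg h _)) (Nat.cast_nonneg _)

lemma binomN_apply {θ : ℝ} (h0 : 0 ≤ θ) (h1 : θ ≤ 1) (m k : ℕ) :
    binomN θ m k = if k ≤ m then ENNReal.ofReal (binR θ m k) else 0 := by
  classical
  rw [binomN, PMF.map_apply]
  have hval : ∀ i : Fin (m+1), (PMF.binomial (prob θ).toNNReal
      (by simpa using ENNReal.toNNReal_mono ENNReal.one_ne_top (prob_le_one θ)) m) i
      = ENNReal.ofReal (binR θ m i.val) := by
    intro i
    refine (PMF.binomial_apply _ _ m i).trans ?_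
    rw [ENNReal.coe_toNNReal (ne_top_of_le_ne_top ENNReal.one_ne_top (prob_le_one θ)), prob_eq h1, binR]
    have h1θ : (1:ℝ≥0∞) - ENNReal.ofReal θ = ENNReal.ofReal (1 - θ) := by
      rw [← ENNReal.ofReal_one, ← ENNReal.ofReal_sub _ h0]
    rw [h1θ, ← ENNReal.ofReal_pow h0, ← ENNReal.ofReal_pow (by linarith),
      ← ENNReal.ofReal_natCast (m.choose i.val), ← ENNReal.ofReal_mul (pow_nonneg h0 _),
      ← ENNReal.ofReal_mul (mul_nonneg (pow_nonneg h0 _) (pow_nonneg (by linarith) _))]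
    rfl
  by_cases hk : k ≤ m
  · rw [tsum_eq_single (⟨k, Nat.lt_succ_of_le hk⟩ : Fin (m+1))
      (by intro b hb; rw [if_neg]; intro hh; exact hb (Fin.ext hh.symm)), if_pos rfl,
      hval, if_pos hk]
  · rw [if_neg hk]
    refine ENNReal.tsum_eq_zero.mpr fun i => ?_
    rw [if_neg]; intro hh; exact hk (hh ▸ i.val.le_of_lt_succ i.isLt)

/-- The "noise" part of `lawP`/`lawQ`: counts of special messages among the `m` other users. -/
def lawA (θC θA : ℝ) (m : ℕ) : PMF (ℕ × ℕ) :=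
  (binomN θC m).bind fun c => (binomN θA c).map fun a => (a, c - a)

lemma binomN_eq_zero {θ : ℝ} (h0 : 0 ≤ θ) (h1 : θ ≤ 1) {m k : ℕ} (h : m < k) :
    binomN θ m k = 0 := by rw [binomN_apply h0 h1, if_neg (by omega)]

lemma lawA_apply {θC θA : ℝ} (hA0 : 0 ≤ θA) (hA1 : θA ≤ 1) (m a b : ℕ) :
    lawA θC θA m (a, b) = binomN θC m (a + b) * binomN θA (a + b) a := by
  classical
  rw [lawA, PMF.bind_apply]
  have hmap : ∀ c, (PMF.map (fun a' => (a', c - a')) (binomN θA c)) (a, b)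
      = if c - a = b then binomN θA c a else 0 := by
    intro c
    rw [PMF.map_apply]
    by_cases hc : c - a = b
    · rw [if_pos hc, tsum_eq_single a (fun a' ha' => by
        rw [if_neg]; intro hh; exact ha' (congrArg Prod.fst hh).symm), if_pos (by rw [hc])]
    · rw [if_neg hc]
      refine ENNReal.tsum_eq_zero.mpr fun a' => ?_
      rw [if_neg]; intro hh
      injection hh with h1 h2
      subst h1; exact hc h2.symm
  refine Eq.trans (tsum_congr fun c => by rw [hmap]) ?_
  rw [tsum_eq_single (a + b) (fun c hc => ?_)]
  · rw [if_pos (by omega)]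
  · by_cases hca : c - a = b
    · rw [if_pos hca, binomN_eq_zero hA0 hA1 (by omega), mul_zero]
    · rw [if_neg hca, mul_zero]

/-! ### The multinomial weight and its recurrence -/

def gR (r0 r1 : ℝ) (m a b : ℕ) : ℝ :=
  (m.choose (a+b)) * ((a+b).choose a) * r0^a * r1^b * (1-r0-r1)^(m-(a+b))

lemma gR_nonneg {r0 r1 : ℝ} (h0 : 0 ≤ r0) (h1 : 0 ≤ r1) (hs : r0 + r1 ≤ 1) (m a b : ℕ) :
    0 ≤ gR r0 r1 m a b := by
  have : (0:ℝ) ≤ 1 - r0 - r1 := by linarith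
  unfold gR; positivity

lemma choose_id (m a' b' : ℕ) :
    ((m+1).choose (a'+1+(b'+1)) * ((a'+1+(b'+1)).choose (a'+1)) : ℝ) =
      m.choose (a'+(b'+1)) * ((a'+(b'+1)).choose a') +
      m.choose (a'+1+b') * ((a'+1+b').choose (a'+1)) +
      m.choose (a'+1+(b'+1)) * ((a'+1+(b'+1)).choose (a'+1)) := by
  have h1 : a'+1+(b'+1) = (a'+b'+1)+1 := by omega
  have h2 : a'+(b'+1) = a'+b'+1 := by omega
  have h3 : a'+1+b' = a'+b'+1 := by omega
  rw [h1, h2, h3, Nat.choose_succ_succ (m) (a'+b'+1), Nat.choose_succ_succ (a'+b'+1) a']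
  push_cast
  ring

lemma key_real {r0 r1 : ℝ} (m a b : ℕ) :
    (if 1 ≤ a then r0 * gR r0 r1 m (a-1) b else 0) +
      (if 1 ≤ b then r1 * gR r0 r1 m a (b-1) else 0) +
      (1-r0-r1) * gR r0 r1 m a b = gR r0 r1 (m+1) a b := by
  rcases a with _ | a' <;> rcases b with _ | b'
  · simp [gR]; ring
  · -- a = 0, b = b'+1
    simp only [Nat.le_refl, if_true, Nat.not_succ_le_zero, if_false, Nat.le_add_left,
      Nat.succ_sub_one, zero_add, add_zero]
    by_cases hc : b' + 1 ≤ m + 1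
    · unfold gR
      simp only [Nat.zero_add, Nat.choose_zero_right, Nat.cast_one, pow_zero]
      rw [Nat.choose_succ_succ m b']
      by_cases hcm : b' + 1 ≤ m
      · have e1 : m - b' = (m - (b'+1)) + 1 := by omega
        have e2 : m + 1 - (b'+1) = (m - (b'+1)) + 1 := by omega
        rw [e1, e2]
        push_cast
        ring
      · have hb : b' = m := by omega
        subst hb
        simp [Nat.choose_succ_self]
        ring
    · have z1 : m.choose b' = 0 := Nat.choose_eq_zero_of_lt (by omega)
      have z2 : m.choose (b'+1) = 0 := Nat.choose_eq_zero_of_lt (by omega)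
      have z3 : (m+1).choose (b'+1) = 0 := Nat.choose_eq_zero_of_lt (by omega)
      unfold gR
      simp [z1, z2, z3]
  · -- a = a'+1, b = 0
    simp only [Nat.le_refl, if_true, Nat.not_succ_le_zero, if_false, Nat.le_add_left,
      Nat.succ_sub_one, zero_add, add_zero]
    by_cases hc : a' + 1 ≤ m + 1
    · unfold gR
      simp only [add_zero, Nat.choose_self, Nat.cast_one, pow_zero]
      rw [Nat.choose_succ_succ m a']
      by_cases hcm : a' + 1 ≤ m
      · have e1 : m - a' = (m - (a'+1)) + 1 := by omega
        have e2 : m + 1 - (a'+1) = (m - (a'+1)) + 1 := by omega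
        rw [e1, e2]
        push_cast
        ring
      · have hb : a' = m := by omega
        subst hb
        simp [Nat.choose_succ_self]
        ring
    · have z1 : m.choose a' = 0 := Nat.choose_eq_zero_of_lt (by omega)
      have z2 : m.choose (a'+1) = 0 := Nat.choose_eq_zero_of_lt (by omega)
      have z3 : (m+1).choose (a'+1) = 0 := Nat.choose_eq_zero_of_lt (by omega)
      unfold gR
      simp [z1, z2, z3]
  · -- a = a'+1, b = b'+1
    simp only [Nat.le_add_left, if_true, Nat.succ_sub_one]
    have n1 : a' + (b'+1) = a'+b'+1 := by omega
    have n2 : a' + 1 + b' = a'+b'+1 := by omega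
    have n3 : a' + 1 + (b'+1) = a'+b'+2 := by omega
    have hch := choose_id m a' b'
    rw [n1, n2, n3] at hch
    unfold gR
    rw [n1, n2, n3]
    by_cases hc : a' + b' + 2 ≤ m + 1
    · by_cases hcm : a' + b' + 2 ≤ m
      · have e1 : m - (a'+b'+1) = (m - (a'+b'+2)) + 1 := by omega
        have e2 : m + 1 - (a'+b'+2) = (m - (a'+b'+2)) + 1 := by omega
        rw [e1, e2]
        linear_combination (-(r0^(a'+1) * r1^(b'+1) * (1-r0-r1)^(m - (a'+b'+2) + 1))) * hch
      · have z3 : m.choose (a'+b'+2) = 0 := Nat.choose_eq_zero_of_lt (by omega)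
        have e1 : m - (a'+b'+1) = 0 := by omega
        have e2 : m + 1 - (a'+b'+2) = 0 := by omega
        rw [e1, e2, z3]
        rw [z3] at hch
        push_cast at hch ⊢
        linear_combination (-(r0^(a'+1) * r1^(b'+1))) * hch
    · have z1 : m.choose (a'+b'+1) = 0 := Nat.choose_eq_zero_of_lt (by omega)
      have z3 : m.choose (a'+b'+2) = 0 := Nat.choose_eq_zero_of_lt (by omega)
      have z4 : (m+1).choose (a'+b'+2) = 0 := Nat.choose_eq_zero_of_lt (by omega)
      simp [z1, z3, z4]

/-! ### Closed form of `lawA` -/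

section R
variable {r0 r1 : ℝ} (h0 : 0 < r0) (h1 : 0 < r1) (hs : r0 + r1 ≤ 1)
include h0 h1 hs

lemma thetaA_mem : 0 ≤ r0 / (r0 + r1) ∧ r0 / (r0 + r1) ≤ 1 := by
  constructor
  · exact div_nonneg h0.le (by linarith)
  · rw [div_le_one (by linarith)]; linarith

lemma lawA_closed (m a b : ℕ) :
    lawA (r0 + r1) (r0 / (r0 + r1)) m (a, b) = ENNReal.ofReal (gR r0 r1 m a b) := by
  obtain ⟨hA0, hA1⟩ := thetaA_mem h0 h1 hs
  rw [lawA_apply hA0 hA1, binomN_apply (by linarith) hs, binomN_apply hA0 hA1]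
  by_cases hm : a + b ≤ m
  · rw [if_pos hm, if_pos (Nat.le_add_right a b),
      ← ENNReal.ofReal_mul (binR_nonneg (by linarith) hs _ _)]
    congr 1
    unfold binR gR
    have hab : a + b - a = b := by omega
    rw [hab]
    have hne : r0 + r1 ≠ 0 := by linarith
    have h1A : 1 - r0 / (r0 + r1) = r1 / (r0 + r1) := by field_simp; ring
    rw [h1A, pow_add, div_pow, div_pow]
    field_simp
    ring
  · rw [if_neg hm, zero_mul]
    unfold gR
    rw [Nat.choose_eq_zero_of_lt (by omega)]
    simp

end R

/-! ### Offset maps and triR values -/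

def eP : Fin 3 → ℕ × ℕ := fun d => if d = 0 then (1,0) else if d = 1 then (0,1) else (0,0)
def eQ : Fin 3 → ℕ × ℕ := fun d => if d = 0 then (0,1) else if d = 1 then (1,0) else (0,0)

section TriVals
variable {w1 w2 : ℝ} (hw1 : 0 ≤ w1) (hw2 : 0 ≤ w2) (hw : w1 + w2 ≤ 1)
include hw1 hw2 hw

lemma one_sub_ofReal {x : ℝ} (hx : 0 ≤ x) : (1:ℝ≥0∞) - ENNReal.ofReal x = ENNReal.ofReal (1-x) := by
  rw [← ENNReal.ofReal_one, ← ENNReal.ofReal_sub _ hx]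

lemma triR_apply_zero : triR w1 w2 0 = ENNReal.ofReal w1 := by
  rw [triR, PMF.ofFintype_apply]
  simp only [Matrix.cons_val_zero]
  exact prob_eq (by linarith)

lemma triR_min_eq : min (prob w2) (1 - prob w1) = ENNReal.ofReal w2 := by
  rw [prob_eq (by linarith : w2 ≤ 1), prob_eq (by linarith : w1 ≤ 1),
    one_sub_ofReal hw1 hw2 hw hw1]
  exact min_eq_left (ENNReal.ofReal_le_ofReal (by linarith))

lemma triR_apply_one : triR w1 w2 1 = ENNReal.ofReal w2 := by
  rw [triR, PMF.ofFintype_apply]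
  simp only [Matrix.cons_val_one, Matrix.head_cons]
  exact triR_min_eq hw1 hw2 hw

lemma triR_apply_two : triR w1 w2 2 = ENNReal.ofReal (1 - w1 - w2) := by
  rw [triR, PMF.ofFintype_apply]
  simp only [Matrix.cons_val_two, Matrix.tail_cons, Matrix.head_cons]
  rw [triR_min_eq hw1 hw2 hw, prob_eq (by linarith : w1 ≤ 1),
    ← ENNReal.ofReal_add hw1 hw2, one_sub_ofReal hw1 hw2 hw (by linarith)]
  congr 1
  ring

end TriVals

/-- Adding a fixed offset to a PMF on ℕ × ℕ. -/
lemma map_add_apply (T : PMF (ℕ × ℕ)) (v z : ℕ × ℕ) :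
    (T.map (fun x => v + x)) z =
      if v.1 ≤ z.1 ∧ v.2 ≤ z.2 then T (z.1 - v.1, z.2 - v.2) else 0 := by
  classical
  obtain ⟨v1, v2⟩ := v
  obtain ⟨z1, z2⟩ := z
  rw [PMF.map_apply]
  by_cases h : v1 ≤ z1 ∧ v2 ≤ z2
  · rw [if_pos h, tsum_eq_single ((z1 - v1, z2 - v2) : ℕ × ℕ) (fun x hx => by
      rw [if_neg]; intro hh
      apply hx
      obtain ⟨x1, x2⟩ := x
      rw [Prod.mk_add_mk] at hh
      injection hh with h1 h2
      exact Prod.ext (by simp; omega) (by simp; omega)), if_pos (by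
        rw [Prod.mk_add_mk]
        exact Prod.ext (by simp; omega) (by simp; omega))]
  · rw [if_neg h]
    refine ENNReal.tsum_eq_zero.mpr fun x => ?_
    rw [if_neg]
    intro hh
    obtain ⟨x1, x2⟩ := x
    rw [Prod.mk_add_mk] at hh
    injection hh with h1 h2
    exact h ⟨by omega, by omega⟩

/-! ### The convolution recurrence -/

section Step
variable {r0 r1 : ℝ} (h0 : 0 < r0) (h1 : 0 < r1) (hs : r0 + r1 ≤ 1)
include h0 h1 hs

lemma step_lemma (m : ℕ) :
    ((triR r0 r1).bind fun d => (lawA (r0+r1) (r0/(r0+r1)) m).map (fun x => eP d + x)) =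
      lawA (r0+r1) (r0/(r0+r1)) (m+1) := by
  refine PMF.ext fun z => ?_
  obtain ⟨a, b⟩ := z
  rw [PMF.bind_apply, tsum_fintype, Fin.sum_univ_three, lawA_closed h0 h1 hs,
    triR_apply_zero h0.le h1.le hs, triR_apply_one h0.le h1.le hs,
    triR_apply_two h0.le h1.le hs]
  have hgnn : ∀ a b, 0 ≤ gR r0 r1 m a b := gR_nonneg h0.le h1.le hs m
  have hmap : ∀ v : ℕ × ℕ, ((lawA (r0+r1) (r0/(r0+r1)) m).map (fun x => v + x)) (a, b)
      = if v.1 ≤ a ∧ v.2 ≤ b then ENNReal.ofReal (gR r0 r1 m (a - v.1) (b - v.2)) else 0 := by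
    intro v
    rw [map_add_apply]
    by_cases h : v.1 ≤ a ∧ v.2 ≤ b
    · rw [if_pos h, if_pos h, lawA_closed h0 h1 hs]
    · rw [if_neg h, if_neg h]
  rw [hmap (eP 0), hmap (eP 1), hmap (eP 2)]
  have heP0 : eP 0 = ((1,0) : ℕ × ℕ) := rfl
  have heP1 : eP 1 = ((0,1) : ℕ × ℕ) := rfl
  have heP2 : eP 2 = ((0,0) : ℕ × ℕ) := rfl
  rw [heP0, heP1, heP2]
  simp only [Nat.zero_le, true_and, and_true, Nat.sub_zero, Nat.le_refl, if_true]
  have e0 : (if 1 ≤ a then ENNReal.ofReal (gR r0 r1 m (a-1) b) else 0)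
      = ENNReal.ofReal (if 1 ≤ a then gR r0 r1 m (a-1) b else 0) := by
    split <;> simp
  have e1 : (if 1 ≤ b then ENNReal.ofReal (gR r0 r1 m a (b-1)) else 0)
      = ENNReal.ofReal (if 1 ≤ b then gR r0 r1 m a (b-1) else 0) := by
    split <;> simp
  rw [e0, e1, ← ENNReal.ofReal_mul h0.le, ← ENNReal.ofReal_mul h1.le,
    ← ENNReal.ofReal_mul (by linarith), ← ENNReal.ofReal_add, ← ENNReal.ofReal_add]
  · congr 1
    have := key_real (r0 := r0) (r1 := r1) m a b
    calc r0 * (if 1 ≤ a then gR r0 r1 m (a-1) b else 0) +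
          r1 * (if 1 ≤ b then gR r0 r1 m a (b-1) else 0) +
          (1-r0-r1) * gR r0 r1 m a b
        = (if 1 ≤ a then r0 * gR r0 r1 m (a-1) b else 0) +
          (if 1 ≤ b then r1 * gR r0 r1 m a (b-1) else 0) +
          (1-r0-r1) * gR r0 r1 m a b := by
          congr 1; congr 1 <;> (split <;> simp)
      _ = gR r0 r1 (m+1) a b := this
  · refine add_nonneg (mul_nonneg h0.le ?_) (mul_nonneg h1.le ?_) <;>
      (split
       · apply hgnn
       · exact le_rfl)
  · exact mul_nonneg (by linarith) (hgnn _ _)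
  · refine mul_nonneg h0.le ?_
    split
    · apply hgnn
    · exact le_rfl
  · refine mul_nonneg h1.le ?_
    split
    · apply hgnn
    · exact le_rfl

lemma lawA_zero_eq : lawA (r0+r1) (r0/(r0+r1)) 0 = PMF.pure (0, 0) := by
  refine PMF.ext fun z => ?_
  obtain ⟨a, b⟩ := z
  rw [lawA_closed h0 h1 hs, PMF.pure_apply]
  rcases Nat.eq_zero_or_pos (a + b) with hab | hab
  · have ha : a = 0 := by omega
    have hb : b = 0 := by omega
    subst ha; subst hb
    simp [gR]
  · rw [if_neg (by intro hh; injection hh with hh1 hh2; omega)]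
    unfold gR
    rw [Nat.choose_eq_zero_of_lt (by omega)]
    simp

end Step

/-! ### Restructuring lawP and lawQ -/

lemma lawP_eq (m : ℕ) (θC θA w1 w2 : ℝ) :
    lawP m θC θA w1 w2 =
      (triR w1 w2).bind fun d => (lawA θC θA m).map (fun x => eP d + x) := by
  unfold lawP lawA
  simp only [PMF.map_bind, PMF.map_comp]
  conv_rhs => rw [PMF.bind_comm (triR w1 w2) (binomN θC m)]
  refine congrArg (PMF.bind _) (funext fun c => ?_)
  simp only [← PMF.bind_pure_comp]
  rw [PMF.bind_comm (binomN θA c) (triR w1 w2)]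
  refine congrArg (PMF.bind _) (funext fun d => ?_)
  refine congrArg (PMF.bind _) (funext fun a => ?_)
  simp only [Function.comp_apply]
  congr 1
  fin_cases d <;> simp [eP, Prod.ext_iff] <;> omega

lemma lawQ_eq (m : ℕ) (θC θA w1 w2 : ℝ) :
    lawQ m θC θA w1 w2 =
      (triR w1 w2).bind fun d => (lawA θC θA m).map (fun x => eQ d + x) := by
  unfold lawQ lawA
  simp only [PMF.map_bind, PMF.map_comp]
  conv_rhs => rw [PMF.bind_comm (triR w1 w2) (binomN θC m)]
  refine congrArg (PMF.bind _) (funext fun c => ?_)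
  simp only [← PMF.bind_pure_comp]
  rw [PMF.bind_comm (binomN θA c) (triR w1 w2)]
  refine congrArg (PMF.bind _) (funext fun d => ?_)
  refine congrArg (PMF.bind _) (funext fun a => ?_)
  simp only [Function.comp_apply]
  congr 1
  fin_cases d <;> simp [eQ, Prod.ext_iff] <;> omega


/-! ### Counting messages in the shuffle -/

section Count

attribute [local instance] Classical.propDecidable

variable {Y : Type*} [Fintype Y] (Lf Gf : Finset Y)

/-- Count of elements in `Lf` and in `Gf`. -/
def cnt (s : Multiset Y) : ℕ × ℕ :=
  (Multiset.countP (fun y => y ∈ Lf) s, Multiset.countP (fun y => y ∈ Gf) s)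

/-- Indicator pair. -/
def ind (y : Y) : ℕ × ℕ := (if y ∈ Lf then 1 else 0, if y ∈ Gf then 1 else 0)

lemma cnt_cons (y : Y) (s : Multiset Y) :
    cnt Lf Gf (y ::ₘ s) = ind Lf Gf y + cnt Lf Gf s := by
  unfold cnt ind
  rw [Multiset.countP_cons, Multiset.countP_cons, Prod.mk_add_mk]
  exact Prod.ext (add_comm _ _) (add_comm _ _)

lemma cnt_zero : cnt Lf Gf 0 = (0, 0) := by simp [cnt]

lemma map_cnt_cons (μ : PMF Y) (l : List (PMF Y)) :
    (shuffle (μ :: l)).map (cnt Lf Gf) =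
      (μ.map (ind Lf Gf)).bind fun v => ((shuffle l).map (cnt Lf Gf)).map (fun x => v + x) := by
  show (PMF.map _ (μ.bind fun y => (shuffle l).map (y ::ₘ ·))) = _
  rw [PMF.map_bind, PMF.bind_map]
  refine congrArg (PMF.bind _) (funext fun y => ?_)
  rw [PMF.map_comp, Function.comp, PMF.map_comp]
  congr 1
  funext s
  simp only [Function.comp_apply]
  exact cnt_cons Lf Gf y s

lemma map_ind_eq_P (μ : PMF Y) (w1 w2 : ℝ) (hw1 : 0 ≤ w1) (hw2 : 0 ≤ w2) (hw : w1 + w2 ≤ 1)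
    (hdisj : ∀ y, y ∈ Lf → y ∉ Gf)
    (hL : ∑ y ∈ Lf, μ y = ENNReal.ofReal w1) (hG : ∑ y ∈ Gf, μ y = ENNReal.ofReal w2) :
    μ.map (ind Lf Gf) = (triR w1 w2).map eP := by
  classical
  have hLHS : ∀ z : ℕ × ℕ, (μ.map (ind Lf Gf)) z
      = ∑ y ∈ Finset.univ.filter (fun y => z = ind Lf Gf y), μ y := by
    intro z
    rw [PMF.map_apply, tsum_fintype]
    simp only [Finset.sum_filter]
    congr!
  have hRHS : ∀ z : ℕ × ℕ, ((triR w1 w2).map eP) z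
      = (if z = (1,0) then triR w1 w2 0 else 0) + (if z = (0,1) then triR w1 w2 1 else 0)
        + (if z = (0,0) then triR w1 w2 2 else 0) := by
    intro z
    rw [PMF.map_apply, tsum_fintype, Fin.sum_univ_three]
    simp [eP]
  refine PMF.ext fun z => ?_
  rw [hLHS, hRHS]
  by_cases h10 : z = ((1,0) : ℕ × ℕ)
  · subst h10
    have hset : Finset.univ.filter (fun y => ((1,0) : ℕ × ℕ) = ind Lf Gf y) = Lf := by
      ext y
      by_cases hyL : y ∈ Lf
      · simp [ind, hyL, hdisj y hyL, Prod.ext_iff]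
      · by_cases hyG : y ∈ Gf <;> simp [ind, hyL, hyG, Prod.ext_iff]
    rw [hset, hL, if_pos rfl, if_neg (by decide), if_neg (by decide),
      triR_apply_zero hw1 hw2 hw]
    simp
  · by_cases h01 : z = ((0,1) : ℕ × ℕ)
    · subst h01
      have hset : Finset.univ.filter (fun y => ((0,1) : ℕ × ℕ) = ind Lf Gf y) = Gf := by
        ext y
        by_cases hyG : y ∈ Gf
        · have hyL : y ∉ Lf := fun hh => hdisj y hh hyG
          simp [ind, hyL, hyG]
        · by_cases hyL : y ∈ Lf <;> simp [ind, hyL, hyG, Prod.ext_iff]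
      rw [hset, hG, if_neg (by decide), if_pos rfl, if_neg (by decide),
        triR_apply_one hw1 hw2 hw]
      simp
    · by_cases h00 : z = ((0,0) : ℕ × ℕ)
      · subst h00
        have hset : Finset.univ.filter (fun y => ((0,0) : ℕ × ℕ) = ind Lf Gf y)
            = (Finset.univ \ Lf) \ Gf := by
          ext y
          by_cases hyL : y ∈ Lf
          · simp [ind, hyL, Prod.ext_iff]
          · by_cases hyG : y ∈ Gf <;> simp [ind, hyL, hyG, Prod.ext_iff]
        have hpart : ∑ y ∈ Lf, μ y + (∑ y ∈ Gf, μ y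
            + ∑ y ∈ (Finset.univ \ Lf) \ Gf, μ y) = 1 := by
          have h2 : ∑ y ∈ (Finset.univ \ Lf) \ Gf, μ y + ∑ y ∈ Gf, μ y
              = ∑ y ∈ Finset.univ \ Lf, μ y :=
            Finset.sum_sdiff (fun y hy => Finset.mem_sdiff.mpr
              ⟨Finset.mem_univ y, fun hh => hdisj y hh hy⟩)
          have h1 : ∑ y ∈ Finset.univ \ Lf, μ y + ∑ y ∈ Lf, μ y = ∑ y : Y, μ y :=
            Finset.sum_sdiff (Finset.subset_univ Lf)
          have htot : ∑ y : Y, μ y = 1 := by rw [← μ.tsum_coe, tsum_fintype]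
          calc ∑ y ∈ Lf, μ y + (∑ y ∈ Gf, μ y + ∑ y ∈ (Finset.univ \ Lf) \ Gf, μ y)
              = (∑ y ∈ (Finset.univ \ Lf) \ Gf, μ y + ∑ y ∈ Gf, μ y) + ∑ y ∈ Lf, μ y := by
                ring
            _ = 1 := by rw [h2, h1, htot]
        have hrest : ∑ y ∈ (Finset.univ \ Lf) \ Gf, μ y
            = 1 - (ENNReal.ofReal w1 + ENNReal.ofReal w2) := by
          rw [hL, hG, ← add_assoc, add_comm] at hpart
          exact ENNReal.eq_sub_of_add_eq
            (ENNReal.add_ne_top.mpr ⟨ENNReal.ofReal_ne_top, ENNReal.ofReal_ne_top⟩) hpart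
        rw [hset, hrest, if_neg (by decide), if_neg (by decide), if_pos rfl,
          triR_apply_two hw1 hw2 hw, ← ENNReal.ofReal_add hw1 hw2,
          one_sub_ofReal hw1 hw2 hw (by linarith)]
        have : 1 - (w1 + w2) = 1 - w1 - w2 := by ring
        rw [this]
        simp
      · have hset : Finset.univ.filter (fun y => z = ind Lf Gf y) = ∅ := by
          ext y
          simp only [Finset.mem_filter, Finset.mem_univ, true_and, Finset.notMem_empty,
            iff_false]
          intro hz
          by_cases hyL : y ∈ Lf
          · exact h10 (by simp [hz, ind, hyL, hdisj y hyL])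
          · by_cases hyG : y ∈ Gf
            · exact h01 (by simp [hz, ind, hyL, hyG])
            · exact h00 (by simp [hz, ind, hyL, hyG])
        rw [hset, if_neg h10, if_neg h01, if_neg h00]
        simp

lemma map_ind_eq_Q (μ : PMF Y) (w1 w2 : ℝ) (hw1 : 0 ≤ w1) (hw2 : 0 ≤ w2) (hw : w1 + w2 ≤ 1)
    (hdisj : ∀ y, y ∈ Lf → y ∉ Gf)
    (hL : ∑ y ∈ Lf, μ y = ENNReal.ofReal w2) (hG : ∑ y ∈ Gf, μ y = ENNReal.ofReal w1) :
    μ.map (ind Lf Gf) = (triR w1 w2).map eQ := by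
  classical
  have hPversion := map_ind_eq_P Lf Gf μ w2 w1 hw2 hw1 (by linarith) hdisj hL hG
  rw [hPversion]
  refine PMF.ext fun z => ?_
  rw [PMF.map_apply, PMF.map_apply, tsum_fintype, tsum_fintype, Fin.sum_univ_three,
    Fin.sum_univ_three]
  have h0P : eP 0 = ((1,0) : ℕ × ℕ) := rfl
  have h1P : eP 1 = ((0,1) : ℕ × ℕ) := rfl
  have h2P : eP 2 = ((0,0) : ℕ × ℕ) := rfl
  have h0Q : eQ 0 = ((0,1) : ℕ × ℕ) := rfl
  have h1Q : eQ 1 = ((1,0) : ℕ × ℕ) := rfl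
  have h2Q : eQ 2 = ((0,0) : ℕ × ℕ) := rfl
  rw [h0P, h1P, h2P, h0Q, h1Q, h2Q, triR_apply_zero hw2 hw1 (by linarith),
    triR_apply_one hw2 hw1 (by linarith), triR_apply_two hw2 hw1 (by linarith),
    triR_apply_zero hw1 hw2 hw, triR_apply_one hw1 hw2 hw, triR_apply_two hw1 hw2 hw]
  have : 1 - w2 - w1 = 1 - w1 - w2 := by ring
  rw [this]
  ring

lemma map_cnt_replicate {r0 r1 : ℝ} (h0 : 0 < r0) (h1 : 0 < r1) (hs : r0 + r1 ≤ 1)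
    (ν : PMF Y) (hν : ν.map (ind Lf Gf) = (triR r0 r1).map eP) (m : ℕ) :
    (shuffle (List.replicate m ν)).map (cnt Lf Gf) = lawA (r0+r1) (r0/(r0+r1)) m := by
  induction m with
  | zero =>
    rw [lawA_zero_eq h0 h1 hs]
    show (PMF.map _ (PMF.pure 0)) = _
    rw [PMF.pure_map, cnt_zero]
  | succ m ih =>
    rw [List.replicate_succ, map_cnt_cons, ih, hν, PMF.bind_map, ← step_lemma h0 h1 hs m]
    rfl

end Count


lemma mem_Gset {Y : Type*} [Fintype Y] {μ0 μ1 : PMF Y} {y : Y} :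
    y ∈ Gset μ0 μ1 ↔ (μ0 y).toReal < (μ1 y).toReal := by
  simp [Gset]

lemma pmf_sum_eq_ofReal {Y : Type*} (μ : PMF Y) (s : Finset Y) :
    ∑ y ∈ s, μ y = ENNReal.ofReal (∑ y ∈ s, (μ y).toReal) := by
  rw [← ENNReal.toReal_sum (fun y _ => μ.apply_ne_top y), ENNReal.ofReal_toReal]
  exact (ENNReal.sum_lt_top.mpr fun y _ => lt_top_iff_ne_top.mpr (μ.apply_ne_top y)).ne

lemma pmf_univ_sum_toReal {Y : Type*} [Fintype Y] (μ : PMF Y) :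
    ∑ y : Y, (μ y).toReal = 1 := by
  rw [← ENNReal.toReal_sum (fun y _ => μ.apply_ne_top y), ← tsum_fintype (L := SummationFilter.unconditional Y), μ.tsum_coe,
    ENNReal.toReal_one]


end Aux

theorem stmt10 {X Y : Type*} [Fintype Y] (n : ℕ) (hn : 1 ≤ n)
    (R1 R2 : X → PMF Y) (x10 x11 xstar : X) (p β α r0 r1 : ℝ)
    (hβ : β = ∑ y ∈ Gset (R1 x10) (R1 x11), ((R1 x11 y).toReal - (R1 x10 y).toReal))
    (hβpos : 0 < β)
    (hpG : p = (∑ y ∈ Gset (R1 x10) (R1 x11), (R1 x11 y).toReal) /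
        (∑ y ∈ Gset (R1 x10) (R1 x11), (R1 x10 y).toReal))
    (hpL : p = (∑ y ∈ Gset (R1 x11) (R1 x10), (R1 x10 y).toReal) /
        (∑ y ∈ Gset (R1 x11) (R1 x10), (R1 x11 y).toReal))
    (hp : 1 < p)
    (hr1 : r1 = ∑ y ∈ Gset (R1 x10) (R1 x11), (R2 xstar y).toReal) (hr1pos : 0 < r1)
    (hr0 : r0 = ∑ y ∈ Gset (R1 x11) (R1 x10), (R2 xstar y).toReal) (hr0pos : 0 < r0)
    (hα : α = β / (p - 1)) (γ : ℝ) (hγ : 0 ≤ γ) :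
    hsDiv (shuffle (R1 x10 :: List.replicate (n - 1) (R2 xstar)))
        (shuffle (R1 x11 :: List.replicate (n - 1) (R2 xstar))) γ ≥
      hsDiv (lawP (n - 1) (r0 + r1) (r0 / (r0 + r1)) (p * α) α)
        (lawQ (n - 1) (r0 + r1) (r0 / (r0 + r1)) (p * α) α) γ := by
  classical
  set μ0 := R1 x10 with hμ0
  set μ1 := R1 x11 with hμ1
  set ν := R2 xstar with hν
  set Gf := Gset μ0 μ1 with hGf
  set Lf := Gset μ1 μ0 with hLf
  have hdisj : ∀ y, y ∈ Lf → y ∉ Gf := fun y hyL hyG =>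
    absurd (mem_Gset.mp hyG) (not_lt.mpr (mem_Gset.mp hyL).le)
  have hdisjLG : Disjoint Lf Gf := Finset.disjoint_left.mpr hdisj
  have hp1 : p - 1 ≠ 0 := sub_ne_zero.mpr (by linarith)
  -- total sums
  have hzero : ∑ y : Y, ((μ1 y).toReal - (μ0 y).toReal) = 0 := by
    rw [Finset.sum_sub_distrib, pmf_univ_sum_toReal, pmf_univ_sum_toReal]
    ring
  have hsplit : ∑ y ∈ Lf ∪ Gf, ((μ1 y).toReal - (μ0 y).toReal)
      = ∑ y : Y, ((μ1 y).toReal - (μ0 y).toReal) :=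
    Finset.sum_subset (Finset.subset_univ _) (fun y _ hy => by
      rw [Finset.mem_union] at hy
      push_neg at hy
      have h1 : ¬ (μ1 y).toReal < (μ0 y).toReal := fun hh => hy.1 (mem_Gset.mpr hh)
      have h2 : ¬ (μ0 y).toReal < (μ1 y).toReal := fun hh => hy.2 (mem_Gset.mpr hh)
      have := le_antisymm (not_lt.mp h1) (not_lt.mp h2)
      linarith)
  rw [Finset.sum_union hdisjLG, hzero] at hsplit
  rw [Finset.sum_sub_distrib, Finset.sum_sub_distrib] at hsplit
  have hβ' : β = (∑ y ∈ Gf, (μ1 y).toReal) - ∑ y ∈ Gf, (μ0 y).toReal := by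
    rw [hβ, Finset.sum_sub_distrib]
  -- G side
  have hSG0ne : (∑ y ∈ Gf, (μ0 y).toReal) ≠ 0 := by
    intro h
    rw [h, div_zero] at hpG
    linarith
  have hSG1 : (∑ y ∈ Gf, (μ1 y).toReal) = p * ∑ y ∈ Gf, (μ0 y).toReal :=
    (div_eq_iff hSG0ne).mp hpG.symm
  have hSG0 : (∑ y ∈ Gf, (μ0 y).toReal) = α := by
    rw [hα]
    rw [hSG1] at hβ'
    field_simp
    linarith
  have hSG1' : (∑ y ∈ Gf, (μ1 y).toReal) = p * α := by rw [hSG1, hSG0]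
  -- L side
  have hβL : β = (∑ y ∈ Lf, (μ0 y).toReal) - ∑ y ∈ Lf, (μ1 y).toReal := by
    rw [hβ'] at *
    linarith
  have hSL1ne : (∑ y ∈ Lf, (μ1 y).toReal) ≠ 0 := by
    intro h
    rw [h, div_zero] at hpL
    linarith
  have hSL0 : (∑ y ∈ Lf, (μ0 y).toReal) = p * ∑ y ∈ Lf, (μ1 y).toReal :=
    (div_eq_iff hSL1ne).mp hpL.symm
  have hSL1 : (∑ y ∈ Lf, (μ1 y).toReal) = α := by
    rw [hα]
    rw [hSL0] at hβL
    field_simp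
    linarith
  have hSL0' : (∑ y ∈ Lf, (μ0 y).toReal) = p * α := by rw [hSL0, hSL1]
  -- positivity and bounds
  have hα0 : 0 < α := by rw [hα]; exact div_pos hβpos (by linarith)
  have hpα0 : 0 < p * α := mul_pos (by linarith) hα0
  have hbound : ∀ μ : PMF Y, (∑ y ∈ Lf, (μ y).toReal) + ∑ y ∈ Gf, (μ y).toReal ≤ 1 := by
    intro μ
    rw [← Finset.sum_union hdisjLG]
    calc ∑ y ∈ Lf ∪ Gf, (μ y).toReal ≤ ∑ y : Y, (μ y).toReal :=
          Finset.sum_le_sum_of_subset_of_nonneg (Finset.subset_univ _)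
            (fun y _ _ => ENNReal.toReal_nonneg)
      _ = 1 := pmf_univ_sum_toReal μ
  have hw : p * α + α ≤ 1 := by
    have := hbound μ0
    rw [hSL0', hSG0] at this
    linarith
  have hr : r0 + r1 ≤ 1 := by
    have := hbound ν
    rw [← hr0, ← hr1] at this
    linarith
  -- indicator pushforwards
  have hind0 : μ0.map (ind Lf Gf) = (triR (p*α) α).map eP :=
    map_ind_eq_P Lf Gf μ0 (p*α) α hpα0.le hα0.le hw hdisj
      (by rw [pmf_sum_eq_ofReal, hSL0']) (by rw [pmf_sum_eq_ofReal, hSG0])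
  have hind1 : μ1.map (ind Lf Gf) = (triR (p*α) α).map eQ :=
    map_ind_eq_Q Lf Gf μ1 (p*α) α hpα0.le hα0.le hw hdisj
      (by rw [pmf_sum_eq_ofReal, hSL1]) (by rw [pmf_sum_eq_ofReal, hSG1'])
  have hindν : ν.map (ind Lf Gf) = (triR r0 r1).map eP :=
    map_ind_eq_P Lf Gf ν r0 r1 hr0pos.le hr1pos.le hr hdisj
      (by rw [pmf_sum_eq_ofReal, ← hr0]) (by rw [pmf_sum_eq_ofReal, ← hr1])
  have hrep := map_cnt_replicate Lf Gf hr0pos hr1pos hr ν hindν (n-1)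
  have hPmain : (shuffle (μ0 :: List.replicate (n-1) ν)).map (cnt Lf Gf)
      = lawP (n-1) (r0+r1) (r0/(r0+r1)) (p*α) α := by
    rw [map_cnt_cons, hrep, hind0, PMF.bind_map, lawP_eq]
    exact congrArg (PMF.bind _) (funext fun d => rfl)
  have hQmain : (shuffle (μ1 :: List.replicate (n-1) ν)).map (cnt Lf Gf)
      = lawQ (n-1) (r0+r1) (r0/(r0+r1)) (p*α) α := by
    rw [map_cnt_cons, hrep, hind1, PMF.bind_map, lawQ_eq]
    exact congrArg (PMF.bind _) (funext fun d => rfl)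
  rw [ge_iff_le, ← hPmain, ← hQmain]
  exact hsDiv_map_le _ _ _ hγ

end
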